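/- arXiv:2012.03381 — 3 statements merged into one kernel-verified Lean document; each statement's English description precedes it below -/
import Mathlib

section
/- Let i be a point of P strictly interior to the convex hull of P, and let U be a convex partition of P. For every other point j of P, there exists an edge {i,k} of the partition with k strictly to the left of or on the oriented line from i through j (i.e., the edges incident to i leave no reflex angle: for each direction, some incident edge lies in the closed left half-plane of the ray from i toward j). -/
open Set

attribute [local instance] Classical.propDecidable

abbrev Pt : Type := ℝ × ℝ

/-- cross(k,l,m) = (l-k) × (m-l), positive iff (k,l,m) is positively oriented. -/
def cross (k l m : Pt) : ℝ :=
  (l.1 - k.1) * (m.2 - l.2) - (l.2 - k.2) * (m.1 - l.1)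

/-- No three distinct points of `P` are collinear. -/
def GenPos (P : Finset Pt) : Prop :=
  ∀ k ∈ P, ∀ l ∈ P, ∀ m ∈ P, k ≠ l → l ≠ m → k ≠ m → cross k l m ≠ 0

/-- The points of `P` on the boundary of the convex hull (extreme points). -/
noncomputable def hullPts (P : Finset Pt) : Finset Pt :=
  P.filter (fun x => x ∈ Set.extremePoints ℝ (convexHull ℝ (P : Set Pt)))

/-- Union of all segments determined by pairs of points of `P`. -/
def arrUnion (P : Finset Pt) : Set Pt :=
  ⋃ a ∈ P, ⋃ b ∈ P, segment ℝ a b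

/-- A bounded face of the arrangement of all segments determined by `P`:
a bounded connected component of the complement of the union of the segments. -/
def IsBoundedFace (P : Finset Pt) (F : Set Pt) : Prop :=
  (∃ x, x ∉ arrUnion P ∧ F = connectedComponentIn (arrUnion P)ᶜ x) ∧
  Bornology.IsBounded F

/-- An empty convex polygon with vertex set `p ⊆ P`: at least 3 vertices, each vertex is
an extreme point of the hull of `p`, and no point of `P` lies in the interior. -/
def IsEmptyPolygon (P p : Finset Pt) : Prop :=
  p ⊆ P ∧ 3 ≤ p.card ∧
  (∀ v ∈ p, v ∈ Set.extremePoints ℝ (convexHull ℝ (p : Set Pt))) ∧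
  ∀ x ∈ P, x ∉ interior (convexHull ℝ (p : Set Pt))

/-- `{a,b}` is an edge of the polygon with vertex set `p`: a segment between two
distinct vertices lying on the boundary of the polygon. -/
def IsEdgeOf (p : Finset Pt) (a b : Pt) : Prop :=
  a ∈ p ∧ b ∈ p ∧ a ≠ b ∧
  segment ℝ a b ⊆ frontier (convexHull ℝ (p : Set Pt))

/-- A convex partition of `P`: a finite set of empty convex polygons with vertices in `P`,
pairwise interior-disjoint, whose union is the convex hull of `P`. -/
def IsConvexPartition (P : Finset Pt) (U : Finset (Finset Pt)) : Prop :=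
  (∀ p ∈ U, IsEmptyPolygon P p) ∧
  (∀ p ∈ U, ∀ q ∈ U, p ≠ q →
    interior (convexHull ℝ (p : Set Pt)) ∩ interior (convexHull ℝ (q : Set Pt)) = ∅) ∧
  (⋃ p ∈ U, convexHull ℝ (p : Set Pt)) = convexHull ℝ (P : Set Pt)

/-! ### Auxiliary material -/

/-- The planar cross product of two vectors. -/
def cross2 (w w' : Pt) : ℝ := w.1 * w'.2 - w.2 * w'.1

lemma cross_eq_cross2 (i a b : Pt) : cross i a b = cross2 (a - i) (b - i) := by
  simp only [cross, cross2, Prod.fst_sub, Prod.snd_sub]; ring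

lemma cross2_add_right (u w w' : Pt) : cross2 u (w + w') = cross2 u w + cross2 u w' := by
  simp only [cross2, Prod.fst_add, Prod.snd_add]; ring

lemma cross2_smul_right (u : Pt) (c : ℝ) (w : Pt) : cross2 u (c • w) = c * cross2 u w := by
  simp only [cross2, Prod.smul_fst, Prod.smul_snd, smul_eq_mul]; ring

lemma cross2_sum {α : Type*} (s : Finset α) (w : α → ℝ) (y : α → Pt) (u : Pt) :
    cross2 u (∑ v ∈ s, w v • y v) = ∑ v ∈ s, w v * cross2 u (y v) := by
  classical
  induction s using Finset.induction_on with
  | empty => simp [cross2]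
  | insert _ _ h ih =>
      rw [Finset.sum_insert h, Finset.sum_insert h, cross2_add_right, cross2_smul_right, ih]

lemma mem_hull_iff (s : Finset Pt) (x : Pt) :
    x ∈ convexHull ℝ (s : Set Pt) ↔
    ∃ w : Pt → ℝ, (∀ y ∈ s, 0 ≤ w y) ∧ ∑ y ∈ s, w y = 1 ∧ ∑ y ∈ s, w y • y = x := by
  rw [Finset.convexHull_eq]
  constructor
  · rintro ⟨w, h0, h1, h2⟩
    exact ⟨w, h0, h1, by rw [Finset.centerMass_eq_of_sum_1 _ _ h1] at h2; simpa using h2⟩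
  · rintro ⟨w, h0, h1, h2⟩
    exact ⟨w, h0, h1, by rw [Finset.centerMass_eq_of_sum_1 _ _ h1]; simpa using h2⟩

lemma hull_cross2_le {s : Finset Pt} {x : Pt} (hx : x ∈ convexHull ℝ (s : Set Pt))
    (L z : Pt) (c : ℝ) (h : ∀ y ∈ s, cross2 L (y - z) ≤ c) : cross2 L (x - z) ≤ c := by
  obtain ⟨w, h0, h1, h2⟩ := (mem_hull_iff s x).1 hx
  have hxz : x - z = ∑ y ∈ s, w y • (y - z) := by
    simp only [smul_sub, Finset.sum_sub_distrib, h2, ← Finset.sum_smul, h1, one_smul]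
  rw [hxz, cross2_sum]
  calc ∑ y ∈ s, w y * cross2 L (y - z) ≤ ∑ y ∈ s, w y * c := by
        exact Finset.sum_le_sum fun y hy => mul_le_mul_of_nonneg_left (h y hy) (h0 y hy)
    _ = c := by rw [← Finset.sum_mul, h1, one_mul]

lemma phi_eq (φ : Pt →L[ℝ] ℝ) (w : Pt) : φ w = w.1 * φ (1,0) + w.2 * φ (0,1) := by
  have hw : w = w.1 • ((1:ℝ),(0:ℝ)) + w.2 • ((0:ℝ),(1:ℝ)) := by
    ext <;> simp
  rw [show φ w = φ (w.1 • ((1:ℝ),(0:ℝ)) + w.2 • ((0:ℝ),(1:ℝ))) from by rw [← hw]]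
  rw [map_add, map_smul, map_smul, smul_eq_mul, smul_eq_mul]

lemma phi_ne_zero (φ : Pt →L[ℝ] ℝ) (h : φ ≠ 0) : (φ (1,0), φ (0,1)) ≠ (0 : Pt) := by
  intro hc
  apply h
  have h1 : φ (1,0) = 0 := congrArg Prod.fst hc
  have h2 : φ (0,1) = 0 := congrArg Prod.snd hc
  refine ContinuousLinearMap.ext fun w => ?_
  rw [phi_eq φ w, h1, h2]
  simp

/-- face restriction: a hull point where a supporting functional attains its max is in
the hull of the vertices attaining the max. -/
lemma mem_hull_face {s : Finset Pt} {x : Pt} (φ : Pt →L[ℝ] ℝ) {c : ℝ}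
    (hx : x ∈ convexHull ℝ (s : Set Pt)) (hle : ∀ y ∈ s, φ y ≤ c) (hc : φ x = c) :
    x ∈ convexHull ℝ ((s.filter fun y => φ y = c : Finset Pt) : Set Pt) := by
  obtain ⟨w, h0, h1, h2⟩ := (mem_hull_iff s x).1 hx
  have hphix : φ x = ∑ y ∈ s, w y * φ y := by
    rw [← h2, map_sum]; simp [smul_eq_mul]
  have hkey : ∀ y ∈ s, w y ≠ 0 → φ y = c := by
    intro y hy hwy
    by_contra hne
    have hlt : w y * φ y < w y * c :=
      mul_lt_mul_of_pos_left (lt_of_le_of_ne (hle y hy) hne)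
        (lt_of_le_of_ne (h0 y hy) (Ne.symm hwy))
    have hsum : ∑ z ∈ s, w z * φ z < ∑ z ∈ s, w z * c :=
      Finset.sum_lt_sum (fun z hz => mul_le_mul_of_nonneg_left (hle z hz) (h0 z hz)) ⟨y, hy, hlt⟩
    rw [← hphix, ← Finset.sum_mul, h1, one_mul, hc] at hsum
    exact lt_irrefl _ hsum
  rw [mem_hull_iff]
  refine ⟨w, fun y hy => h0 y (Finset.mem_filter.1 hy).1, ?_, ?_⟩
  · rw [Finset.sum_filter_of_ne (fun y hy hwy => hkey y hy hwy), h1]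
  · rw [Finset.sum_filter_of_ne, h2]
    intro y hy hwy
    exact hkey y hy (by simpa using fun h => hwy (by rw [h, zero_smul]))

/-- 1D collinearity contradiction: in general position a point of `P` cannot lie in
the hull of other points of `P` all lying on one line. -/
lemma no_collinear_face {P : Finset Pt} (hgp : GenPos P) {Q : Finset Pt} (hQP : Q ⊆ P)
    {i : Pt} (hiP : i ∈ P) (hiQ : i ∉ Q) (φ : Pt →L[ℝ] ℝ) (hφ : φ ≠ 0) {c : ℝ}
    (hface : ∀ a ∈ Q, φ a = c) (hci : φ i = c)
    (hx : i ∈ convexHull ℝ (Q : Set Pt)) : False := by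
  rcases Finset.eq_empty_or_nonempty Q with rfl | hQne
  · simp at hx
  have hQ2 : 1 < Q.card := by
    by_contra hcard
    push_neg at hcard
    obtain ⟨a, ha⟩ := hQne
    have hQa : (Q : Set Pt) = {a} := by
      ext z
      simp only [Finset.mem_coe, Set.mem_singleton_iff]
      exact ⟨fun hz => Finset.card_le_one.mp hcard z hz a ha,
        fun h => h ▸ ha⟩
    rw [hQa, convexHull_singleton] at hx
    exact hiQ (Set.mem_singleton_iff.mp hx ▸ ha)
  rcases Finset.one_lt_card.mp hQ2 with ⟨a, ha, b, hb, hab⟩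
  · set f1 := φ (1,0); set f2 := φ (0,1)
    have hf : (f1, f2) ≠ (0 : Pt) := phi_ne_zero φ hφ
    have hfa : f1 * (b - a).1 + f2 * (b - a).2 = 0 := by
      have := phi_eq φ (b - a)
      rw [map_sub, hface a ha, hface b hb] at this
      simp only [Prod.fst_sub, Prod.snd_sub] at this ⊢
      linarith [this]
    have hfb : f1 * (i - a).1 + f2 * (i - a).2 = 0 := by
      have := phi_eq φ (i - a)
      rw [map_sub, hface a ha, hci] at this
      simp only [Prod.fst_sub, Prod.snd_sub] at this ⊢
      linarith [this]
    have hcr : cross a b i = 0 := by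
      have hid : (f1^2 + f2^2) * cross a b i =
          (f1 * (b-a).1 + f2 * (b-a).2) * (f1 * (i-a).2 - f2 * (i-a).1)
          - (f1 * (b-a).2 - f2 * (b-a).1) * (f1 * (i-a).1 + f2 * (i-a).2) := by
        simp only [cross, Prod.fst_sub, Prod.snd_sub]; ring
      rw [hfa, hfb] at hid
      have hf2 : f1^2 + f2^2 ≠ 0 := by
        intro h
        apply hf
        have h1 : f1 = 0 := by nlinarith [sq_nonneg f1, sq_nonneg f2]
        have h2 : f2 = 0 := by nlinarith [sq_nonneg f1, sq_nonneg f2]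
        rw [h1, h2]; rfl
      have hid0 : (f1^2 + f2^2) * cross a b i = 0 := by rw [hid]; ring
      rcases mul_eq_zero.mp hid0 with h | h
      · exact absurd h hf2
      · exact h
    have hia : a ≠ i := fun h => hiQ (h ▸ ha)
    have hib : b ≠ i := fun h => hiQ (h ▸ hb)
    exact hgp a (hQP ha) b (hQP hb) i hiP hab hib hia hcr

/-- supporting functional at a non-interior point of a full-dimensional hull -/
lemma exists_support {q : Finset Pt}
    (hne : (interior (convexHull ℝ (q : Set Pt))).Nonempty)
    {x : Pt} (hx : x ∉ interior (convexHull ℝ (q : Set Pt))) :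
    ∃ φ : Pt →L[ℝ] ℝ, φ ≠ 0 ∧ ∀ y ∈ convexHull ℝ (q : Set Pt), φ y ≤ φ x := by
  have hconv : Convex ℝ (convexHull ℝ (q : Set Pt)) := convex_convexHull ℝ _
  obtain ⟨φ, hφ⟩ := geometric_hahn_banach_open_point (hconv.interior) isOpen_interior hx
  refine ⟨φ, ?_, ?_⟩
  · obtain ⟨y0, hy0⟩ := hne
    intro h
    have := hφ y0 hy0
    rw [h] at this
    simp at this
  · intro y hy
    obtain ⟨y0, hy0⟩ := hne
    have hseg : ∀ t : ℝ, 0 < t → t ≤ 1 →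
        φ (t • y0 + (1-t) • y) < φ x := fun t ht0 ht1 =>
      hφ _ (hconv.combo_interior_closure_mem_interior hy0
        (subset_closure hy) ht0 (by linarith) (by ring))
    have hlim : Filter.Tendsto (fun t : ℝ => φ (t • y0 + (1-t) • y))
        (nhdsWithin (0:ℝ) (Set.Ioi 0)) (nhds (φ ((0:ℝ) • y0 + (1-(0:ℝ)) • y))) := by
      apply Filter.Tendsto.mono_left _ nhdsWithin_le_nhds
      exact (Continuous.tendsto (by continuity) 0)
    have h0 : φ ((0:ℝ) • y0 + (1-(0:ℝ)) • y) = φ y := by norm_num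
    rw [h0] at hlim
    have hev : ∀ᶠ t in nhdsWithin (0:ℝ) (Set.Ioi 0),
        φ (t • y0 + (1-t) • y) ≤ φ x := by
      filter_upwards [Ioc_mem_nhdsGT_of_mem (Set.left_mem_Ico.mpr one_pos)] with t ht
      exact le_of_lt (hseg t ht.1 ht.2)
    exact le_of_tendsto hlim hev

/-- a non-extreme vertex is in the hull of the others -/
lemma mem_hull_erase {s : Finset Pt} {x : Pt} (hxs : x ∈ s)
    (hx : x ∉ Set.extremePoints ℝ (convexHull ℝ (s : Set Pt))) :
    x ∈ convexHull ℝ ((s.erase x : Finset Pt) : Set Pt) := by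
  have hxh : x ∈ convexHull ℝ (s : Set Pt) := subset_convexHull ℝ _ hxs
  rw [mem_extremePoints] at hx
  push_neg at hx
  obtain ⟨x₁, hx₁, x₂, hx₂, hseg, hne⟩ := hx hxh
  obtain ⟨a, b, ha, hb, hab, habx⟩ := hseg
  obtain ⟨α, hα0, hα1, hαx⟩ := (mem_hull_iff s x₁).1 hx₁
  obtain ⟨β, hβ0, hβ1, hβx⟩ := (mem_hull_iff s x₂).1 hx₂
  set γ : Pt → ℝ := fun y => a * α y + b * β y with hγ
  have hγ0 : ∀ y ∈ s, 0 ≤ γ y := fun y hy =>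
    add_nonneg (mul_nonneg ha.le (hα0 y hy)) (mul_nonneg hb.le (hβ0 y hy))
  have hγ1 : ∑ y ∈ s, γ y = 1 := by
    simp only [hγ, Finset.sum_add_distrib, ← Finset.mul_sum, hα1, hβ1, mul_one, hab]
  have hγx : ∑ y ∈ s, γ y • y = x := by
    simp only [hγ, add_smul, mul_smul, Finset.sum_add_distrib, ← Finset.smul_sum, hαx, hβx]
    exact habx
  have hwle : ∀ (w : Pt → ℝ), (∀ y ∈ s, 0 ≤ w y) → ∑ y ∈ s, w y = 1 → w x ≤ 1 := by
    intro w h0 h1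
    rw [← h1]
    exact Finset.single_le_sum h0 hxs
  have hγlt : γ x < 1 := by
    rcases lt_or_eq_of_le (hwle γ hγ0 hγ1) with h | h
    · exact h
    exfalso
    have h' : a * α x + b * β x = 1 := h
    have hα2 : α x = 1 := by
      by_contra hc
      have h1 : α x < 1 := lt_of_le_of_ne (hwle α hα0 hα1) hc
      have h2 : β x ≤ 1 := hwle β hβ0 hβ1
      nlinarith
    have hβ2 : β x = 1 := by
      by_contra hc
      have h1 : β x < 1 := lt_of_le_of_ne (hwle β hβ0 hβ1) hc
      nlinarith
    have hx1 : x₁ = x := by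
      rw [← hαx]
      have hz : ∀ y ∈ s, y ≠ x → α y = 0 := by
        intro y hy hyx
        have hs0 : ∑ y ∈ s.erase x, α y = 0 := by
          have := Finset.add_sum_erase s α hxs
          rw [hα1] at this
          linarith [this, hα2]
        exact (Finset.sum_eq_zero_iff_of_nonneg
          (fun z hz => hα0 z (Finset.mem_of_mem_erase hz))).1 hs0 y
          (Finset.mem_erase.2 ⟨hyx, hy⟩)
      rw [Finset.sum_eq_single_of_mem x hxs (fun y hy hyx => by rw [hz y hy hyx, zero_smul])]
      rw [hα2, one_smul]
    have hx2 : x₂ = x := by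
      rw [← hβx]
      have hz : ∀ y ∈ s, y ≠ x → β y = 0 := by
        intro y hy hyx
        have hs0 : ∑ y ∈ s.erase x, β y = 0 := by
          have := Finset.add_sum_erase s β hxs
          rw [hβ1] at this
          linarith [this, hβ2]
        exact (Finset.sum_eq_zero_iff_of_nonneg
          (fun z hz => hβ0 z (Finset.mem_of_mem_erase hz))).1 hs0 y
          (Finset.mem_erase.2 ⟨hyx, hy⟩)
      rw [Finset.sum_eq_single_of_mem x hxs (fun y hy hyx => by rw [hz y hy hyx, zero_smul])]
      rw [hβ2, one_smul]
    exact hne hx1 hx2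
  have hsum_erase : ∑ y ∈ s.erase x, γ y = 1 - γ x := by
    have := Finset.add_sum_erase s γ hxs
    rw [hγ1] at this
    linarith
  have hpt_erase : ∑ y ∈ s.erase x, γ y • y = x - γ x • x := by
    have := Finset.add_sum_erase s (fun y => γ y • y) hxs
    rw [hγx] at this
    have h2 := this
    exact by
      have : γ x • x + ∑ y ∈ s.erase x, γ y • y = x := h2
      linear_combination (norm := module) this
  have hpos : 0 < 1 - γ x := by linarith
  rw [mem_hull_iff]
  refine ⟨fun y => γ y / (1 - γ x),
    fun y hy => div_nonneg (hγ0 y (Finset.mem_of_mem_erase hy)) hpos.le, ?_, ?_⟩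
  · rw [← Finset.sum_div, hsum_erase, div_self hpos.ne']
  · have : ∑ y ∈ s.erase x, (γ y / (1 - γ x)) • y = (1-γ x)⁻¹ • ∑ y ∈ s.erase x, γ y • y := by
      rw [Finset.smul_sum]
      refine Finset.sum_congr rfl fun y _ => ?_
      rw [smul_smul, div_eq_inv_mul]
    rw [this, hpt_erase]
    rw [smul_sub, smul_smul]
    have hx' : (1 - γ x)⁻¹ • x - ((1 - γ x)⁻¹ * γ x) • x = x := by
      have : (1 - γ x)⁻¹ - (1 - γ x)⁻¹ * γ x = 1 := by
        field_simp
      calc (1 - γ x)⁻¹ • x - ((1 - γ x)⁻¹ * γ x) • x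
          = ((1 - γ x)⁻¹ - (1 - γ x)⁻¹ * γ x) • x := by rw [sub_smul]
        _ = x := by rw [this, one_smul]
    exact hx'

/-- the hull of at least three points of a general-position set has nonempty interior -/
lemma interior_hull_nonempty {P : Finset Pt} (hgp : GenPos P) {q : Finset Pt}
    (hq : q ⊆ P) (hcard : 3 ≤ q.card) :
    (interior (convexHull ℝ (q : Set Pt))).Nonempty := by
  obtain ⟨t, hts, htc⟩ := Finset.exists_subset_card_eq hcard
  obtain ⟨a, b, c, hab, hac, hbc, rfl⟩ := Finset.card_eq_three.1 htc
  have ha : a ∈ q := hts (by simp)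
  have hb : b ∈ q := hts (by simp)
  have hc : c ∈ q := hts (by simp)
  have hncol : ¬ Collinear ℝ ({a, b, c} : Set Pt) := by
    intro hcol
    rw [collinear_iff_of_mem (Set.mem_insert a _)] at hcol
    obtain ⟨v, hv⟩ := hcol
    obtain ⟨r1, hr1⟩ := hv b (by simp)
    obtain ⟨r2, hr2⟩ := hv c (by simp)
    have : cross a b c = 0 := by
      simp only [cross, hr1, hr2, vadd_eq_add, Prod.fst_add, Prod.snd_add,
        Prod.smul_fst, Prod.smul_snd, smul_eq_mul]
      ring
    exact hgp a (hq ha) b (hq hb) c (hq hc) hab hbc hac this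
  have hai : AffineIndependent ℝ ![a, b, c] :=
    affineIndependent_iff_not_collinear_set.2 hncol
  have htop : affineSpan ℝ (Set.range ![a, b, c]) = ⊤ := by
    rw [hai.affineSpan_eq_top_iff_card_eq_finrank_add_one]
    simp
  have htop2 : affineSpan ℝ (q : Set Pt) = ⊤ := by
    have hsub : Set.range ![a, b, c] ⊆ (q : Set Pt) := by
      intro z hz
      simp only [Set.range, Matrix.cons_val_fin_one, Set.mem_setOf_eq] at hz
      obtain ⟨y, rfl⟩ := hz
      fin_cases y <;> simpa using ‹_›
    exact top_unique (htop ▸ affineSpan_mono ℝ hsub)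
  rw [(convex_convexHull ℝ _).interior_nonempty_iff_affineSpan_eq_top,
    affineSpan_convexHull]
  exact htop2

/-- an extreme point of the hull of a finset is not in the hull of the rest -/
lemma extreme_not_mem_erase {s : Finset Pt} {x : Pt}
    (hx : x ∈ Set.extremePoints ℝ (convexHull ℝ (s : Set Pt))) :
    x ∉ convexHull ℝ ((s.erase x : Finset Pt) : Set Pt) := by
  intro hmem
  have hsub : convexHull ℝ ((s.erase x : Finset Pt) : Set Pt) ⊆ convexHull ℝ (s : Set Pt) :=
    convexHull_mono (by exact_mod_cast Finset.erase_subset x s)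
  have hx2 : x ∈ Set.extremePoints ℝ (convexHull ℝ ((s.erase x : Finset Pt) : Set Pt)) := by
    rw [mem_extremePoints] at hx ⊢
    exact ⟨hmem, fun x₁ h₁ x₂ h₂ hseg => hx.2 x₁ (hsub h₁) x₂ (hsub h₂) hseg⟩
  have := extremePoints_convexHull_subset hx2
  simp at this

/-- a supporting line through two vertices gives a segment inside the frontier -/
lemma segment_subset_frontier {p : Finset Pt} {i k : Pt} (hi : i ∈ p) (hk : k ∈ p)
    (L : Pt) (hL : L ≠ 0) (hLk : cross2 L (k - i) = 0)
    (hsupp : ∀ v ∈ p, cross2 L (v - i) ≤ 0) :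
    segment ℝ i k ⊆ frontier (convexHull ℝ (p : Set Pt)) := by
  have hclosed : IsClosed (convexHull ℝ (p : Set Pt)) :=
    Set.Finite.isClosed_convexHull ℝ (Finset.finite_toSet p)
  intro x hx
  have hxh : x ∈ convexHull ℝ (p : Set Pt) :=
    segment_subset_convexHull hi hk hx
  rw [hclosed.frontier_eq]
  refine ⟨hxh, ?_⟩
  intro hxint
  obtain ⟨s₁, s₂, hs₁, hs₂, hs12, hxeq⟩ := hx
  have hxi : x - i = s₂ • (k - i) := by
    have h1 : s₁ = 1 - s₂ := by linarith
    rw [← hxeq, h1]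
    ext <;> simp [Prod.fst_sub, Prod.snd_sub, Prod.smul_fst, Prod.smul_snd, smul_eq_mul] <;> ring
  have hx0 : cross2 L (x - i) = 0 := by
    rw [hxi, cross2_smul_right, hLk, mul_zero]
  rw [mem_interior_iff_mem_nhds, Metric.mem_nhds_iff] at hxint
  obtain ⟨ε, hε, hball⟩ := hxint
  set n : Pt := (-L.2, L.1) with hn
  have hnnorm : ‖n‖ = ‖L‖ := by
    simp [hn, Prod.norm_def, norm_neg, max_comm]
  have hnne : ‖n‖ ≠ 0 := by
    rw [hnnorm]
    exact norm_ne_zero_iff.2 hL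
  have hnpos : 0 < ‖n‖ := lt_of_le_of_ne (norm_nonneg n) (Ne.symm hnne)
  set c : ℝ := ε / (2 * ‖n‖) with hc
  have hcpos : 0 < c := by positivity
  set y : Pt := x + c • n with hy
  have hyball : y ∈ Metric.ball x ε := by
    rw [Metric.mem_ball, dist_eq_norm]
    have : y - x = c • n := by rw [hy]; abel
    rw [this, norm_smul, Real.norm_eq_abs, abs_of_pos hcpos, hc]
    rw [div_mul_eq_mul_div]
    rw [div_lt_iff₀ (by positivity)]
    nlinarith
  have hyh : y ∈ convexHull ℝ (p : Set Pt) := hball hyball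
  have hle : cross2 L (y - i) ≤ 0 := hull_cross2_le hyh L i 0 hsupp
  have hygt : cross2 L (y - i) = cross2 L (x - i) + c * (L.1^2 + L.2^2) := by
    have h1 : y - i = (x - i) + c • n := by rw [hy]; abel
    rw [h1, cross2_add_right, cross2_smul_right]
    have : cross2 L n = L.1^2 + L.2^2 := by simp [cross2, hn]; ring
    rw [this]
  have hLpos : 0 < L.1^2 + L.2^2 := by
    have : L.1 ≠ 0 ∨ L.2 ≠ 0 := by
      by_contra hc2
      push_neg at hc2
      exact hL (Prod.ext hc2.1 hc2.2)
    rcases this with h | h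
    · positivity
    · positivity
  rw [hygt, hx0, zero_add] at hle
  nlinarith

/-- for an interior point `i` of a convex partition and any other point
`j` of `P`, some edge `{i,k}` of the partition has `k` on or to the left of the
oriented line from `i` through `j`. -/
theorem stmt_8 (P : Finset Pt) (hgp : GenPos P) (U : Finset (Finset Pt))
    (hU : IsConvexPartition P U) (hvert : ∀ x ∈ P, ∃ p ∈ U, x ∈ p)
    (i : Pt) (hi : i ∈ P)
    (hint : i ∉ Set.extremePoints ℝ (convexHull ℝ (P : Set Pt)))
    (j : Pt) (hj : j ∈ P) (hij : j ≠ i) :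
    ∃ k : Pt, (∃ p ∈ U, IsEdgeOf p i k) ∧ 0 ≤ cross i j k := by
  obtain ⟨hpolys, hdisj, hcover⟩ := hU
  obtain ⟨p0, hp0U, hip0⟩ := hvert i hi
  obtain ⟨hp0P, hp0card, -, -⟩ := hpolys p0 hp0U
  have hPint : (interior (convexHull ℝ (P : Set Pt))).Nonempty :=
    Set.Nonempty.mono
      (interior_mono (convexHull_mono (by exact_mod_cast hp0P)))
      (interior_hull_nonempty hgp hp0P hp0card)
  -- step 1 : i is interior to the hull of P
  have hiint : i ∈ interior (convexHull ℝ (P : Set Pt)) := by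
    by_contra hnot
    obtain ⟨φ, hφ0, hφle⟩ := exists_support hPint hnot
    have hier : i ∈ convexHull ℝ ((P.erase i : Finset Pt) : Set Pt) := mem_hull_erase hi hint
    have hface := mem_hull_face (s := P.erase i) φ hier
      (fun y hy => hφle y (subset_convexHull ℝ _ (Finset.mem_of_mem_erase hy))) rfl
    exact no_collinear_face hgp
      (fun z hz => Finset.mem_of_mem_erase (Finset.mem_filter.1 hz).1) hi
      (fun hiQ => (Finset.mem_erase.1 (Finset.mem_filter.1 hiQ).1).1 rfl)
      φ hφ0 (fun a ha => (Finset.mem_filter.1 ha).2) rfl hface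
  rw [mem_interior_iff_mem_nhds, Metric.mem_nhds_iff] at hiint
  obtain ⟨r, hr, hball⟩ := hiint
  set u : Pt := j - i with hu_def
  have hu : u ≠ 0 := sub_ne_zero.2 hij
  have huu : 0 < u.1^2 + u.2^2 := by
    have : u.1 ≠ 0 ∨ u.2 ≠ 0 := by
      by_contra hc2
      push_neg at hc2
      exact hu (Prod.ext hc2.1 hc2.2)
    rcases this with h | h
    · positivity
    · positivity
  set d : Pt := (-u.2, u.1) with hd_def
  have hd : d ≠ 0 := by
    intro h
    apply hu
    have h1 : -u.2 = 0 := congrArg Prod.fst h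
    have h2 : u.1 = 0 := congrArg Prod.snd h
    exact Prod.ext h2 (neg_eq_zero.mp h1)
  have hdpos : 0 < ‖d‖ := norm_pos_iff.2 hd
  have hcd : cross2 u d = u.1^2 + u.2^2 := by
    simp only [cross2, hd_def]
    ring
  -- step 2 : some polygon has points arbitrarily close to i strictly to the left of u
  have hC : ∃ p ∈ U, ∀ δ : ℝ, 0 < δ →
      ∃ x ∈ convexHull ℝ ((p : Finset Pt) : Set Pt), dist x i < δ ∧ 0 < cross2 u (x - i) := by
    by_contra hno
    push_neg at hno
    have hno' : ∀ p : Finset Pt, ∃ δ : ℝ, 0 < δ ∧ (p ∈ U →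
        ∀ x ∈ convexHull ℝ (p : Set Pt), dist x i < δ → cross2 u (x - i) ≤ 0) := by
      intro p
      by_cases hp : p ∈ U
      · obtain ⟨δ, hδ, hδ2⟩ := hno p hp
        exact ⟨δ, hδ, fun _ => hδ2⟩
      · exact ⟨1, one_pos, fun h => absurd h hp⟩
    choose δf hδf using hno'
    set δ0 : ℝ := min r (U.inf' ⟨p0, hp0U⟩ δf) with hδ0
    have hδ0pos : 0 < δ0 :=
      lt_min hr ((Finset.lt_inf'_iff _).2 fun p _ => (hδf p).1)
    set ε : ℝ := δ0 / (2 * ‖d‖) with hε_def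
    have hεpos : 0 < ε := by positivity
    set x : Pt := i + ε • d with hx_def
    have hxi : x - i = ε • d := by rw [hx_def]; abel
    have hdist : dist x i = ε * ‖d‖ := by
      rw [dist_eq_norm, hxi, norm_smul, Real.norm_eq_abs, abs_of_pos hεpos]
    have hdlt : dist x i < δ0 := by
      rw [hdist, hε_def, div_mul_eq_mul_div]
      rw [div_lt_iff₀ (by positivity)]
      nlinarith
    have hxP : x ∈ convexHull ℝ (P : Set Pt) :=
      hball (Metric.mem_ball.2 (lt_of_lt_of_le hdlt (min_le_left _ _)))
    rw [← hcover] at hxP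
    simp only [Set.mem_iUnion] at hxP
    obtain ⟨p1, hp1U, hxp1⟩ := hxP
    have hle := (hδf p1).2 hp1U x hxp1
      (lt_of_lt_of_le hdlt (le_trans (min_le_right _ _) (Finset.inf'_le δf hp1U)))
    rw [hxi, cross2_smul_right, hcd] at hle
    nlinarith
  obtain ⟨p, hpU, hp⟩ := hC
  obtain ⟨hpP, hpcard, hpext, hpempty⟩ := hpolys p hpU
  have hpclosed : IsClosed (convexHull ℝ (p : Set Pt)) :=
    Set.Finite.isClosed_convexHull ℝ (Finset.finite_toSet p)
  -- i belongs to the hull of p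
  have hiconv : i ∈ convexHull ℝ (p : Set Pt) := by
    rw [← hpclosed.closure_eq, Metric.mem_closure_iff]
    intro ε hε
    obtain ⟨x, hx, hdx, -⟩ := hp ε hε
    exact ⟨x, hx, by rwa [dist_comm]⟩
  -- some vertex of p is strictly left of the line i → j
  obtain ⟨x1, hx1, -, hx1pos⟩ := hp 1 one_pos
  have hv0ex : ∃ v ∈ p, 0 < cross2 u (v - i) := by
    by_contra hvn
    push_neg at hvn
    have := hull_cross2_le hx1 u i 0 (fun y hy => hvn y hy)
    linarith
  obtain ⟨v0, hv0p, hv0pos⟩ := hv0ex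
  -- i is a vertex of p
  have hip : i ∈ p := by
    by_contra hnip
    have hnint : i ∉ interior (convexHull ℝ (p : Set Pt)) := hpempty i hi
    obtain ⟨φ, hφ0, hφle⟩ := exists_support (interior_hull_nonempty hgp hpP hpcard) hnint
    have hface := mem_hull_face (s := p) φ hiconv
      (fun y hy => hφle y (subset_convexHull ℝ _ hy)) rfl
    exact no_collinear_face hgp (fun z hz => hpP (Finset.mem_filter.1 hz).1) hi
      (fun hiQ => hnip (Finset.mem_filter.1 hiQ).1) φ hφ0
      (fun a ha => (Finset.mem_filter.1 ha).2) rfl hface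
  -- set of other vertices
  set S : Finset Pt := p.erase i with hS
  have hSsub : ∀ v ∈ S, v ∈ p := fun v hv => Finset.mem_of_mem_erase hv
  have hSne : ∀ v ∈ S, v ≠ i := fun v hv => (Finset.mem_erase.1 hv).1
  have hScard : 2 ≤ S.card := by
    rw [hS, Finset.card_erase_of_mem hip]
    omega
  have hSnonempty : S.Nonempty := Finset.card_pos.1 (by omega)
  have hinotS : i ∉ convexHull ℝ (S : Set Pt) := extreme_not_mem_erase (hpext i hip)
  obtain ⟨φ, cc, hφi, hφS⟩ := geometric_hahn_banach_point_closed (convex_convexHull ℝ _)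
    (Set.Finite.isClosed_convexHull ℝ (Finset.finite_toSet S)) hinotS
  have ha : ∀ v ∈ S, 0 < φ v - φ i := fun v hv => by
    have := hφS v (subset_convexHull ℝ _ hv)
    linarith
  have hφ0 : φ ≠ 0 := by
    obtain ⟨v, hv⟩ := hSnonempty
    intro h
    have := ha v hv
    rw [h] at this
    simp at this
  set f1 : ℝ := φ (1,0) with hf1
  set f2 : ℝ := φ (0,1) with hf2
  have hF : ((f1, f2) : Pt) ≠ 0 := phi_ne_zero φ hφ0
  have hFpos : 0 < f1^2 + f2^2 := by
    have : f1 ≠ 0 ∨ f2 ≠ 0 := by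
      by_contra hc2
      push_neg at hc2
      exact hF (Prod.ext hc2.1 hc2.2)
    rcases this with h | h
    · positivity
    · positivity
  have hdotv : ∀ v : Pt, f1 * (v - i).1 + f2 * (v - i).2 = φ v - φ i := by
    intro v
    have := phi_eq φ (v - i)
    rw [map_sub] at this
    rw [hf1, hf2]
    linarith [this]
  set gv : Pt → ℝ := fun v => f1 * (v - i).2 - f2 * (v - i).1 with hgv
  have hmaster : ∀ v w : Pt, (f1^2 + f2^2) * cross2 (v - i) (w - i)
      = (φ v - φ i) * gv w - gv v * (φ w - φ i) := by
    intro v w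
    rw [← hdotv v, ← hdotv w]
    simp only [hgv, cross2, Prod.fst_sub, Prod.snd_sub]
    ring
  have horder : ∀ v ∈ S, ∀ w ∈ S,
      gv v / (φ v - φ i) ≤ gv w / (φ w - φ i) → 0 ≤ cross2 (v - i) (w - i) := by
    intro v hv w hw hkey
    have hav := ha v hv
    have haw := ha w hw
    rw [div_le_div_iff₀ hav haw] at hkey
    have hm := hmaster v w
    nlinarith
  obtain ⟨k1, hk1S, hk1max⟩ := S.exists_max_image (fun v => gv v / (φ v - φ i)) hSnonempty
  obtain ⟨k2, hk2S, hk2min⟩ := S.exists_min_image (fun v => gv v / (φ v - φ i)) hSnonempty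
  have hsupp1 : ∀ v ∈ p, cross2 (k1 - i) (v - i) ≤ 0 := by
    intro v hvp
    by_cases hvi : v = i
    · subst hvi
      simp [cross2]
    · have hvS : v ∈ S := Finset.mem_erase.2 ⟨hvi, hvp⟩
      have h := horder v hvS k1 hk1S (hk1max v hvS)
      have hflip : cross2 (k1 - i) (v - i) = - cross2 (v - i) (k1 - i) := by
        simp only [cross2, Prod.fst_sub, Prod.snd_sub, Prod.fst_add, Prod.snd_add, Prod.fst_neg, Prod.snd_neg]; ring
      linarith
  have hsupp2 : ∀ v ∈ p, 0 ≤ cross2 (k2 - i) (v - i) := by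
    intro v hvp
    by_cases hvi : v = i
    · subst hvi
      simp [cross2]
    · have hvS : v ∈ S := Finset.mem_erase.2 ⟨hvi, hvp⟩
      exact horder k2 hk2S v hvS (hk2min v hvS)
  have hik1 : i ≠ k1 := fun h => (hSne k1 hk1S) h.symm
  have hik2 : i ≠ k2 := fun h => (hSne k2 hk2S) h.symm
  have hedge1 : IsEdgeOf p i k1 := by
    refine ⟨hip, hSsub k1 hk1S, hik1, segment_subset_frontier hip (hSsub k1 hk1S)
      (k1 - i) (sub_ne_zero.2 (hSne k1 hk1S)) ?_ hsupp1⟩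
    simp only [cross2, Prod.fst_sub, Prod.snd_sub, Prod.fst_add, Prod.snd_add, Prod.fst_neg, Prod.snd_neg]; ring
  have hedge2 : IsEdgeOf p i k2 := by
    refine ⟨hip, hSsub k2 hk2S, hik2, segment_subset_frontier hip (hSsub k2 hk2S)
      (i - k2) (sub_ne_zero.2 hik2) ?_ ?_⟩
    · simp only [cross2, Prod.fst_sub, Prod.snd_sub, Prod.fst_add, Prod.snd_add, Prod.fst_neg, Prod.snd_neg]; ring
    · intro v hv
      have := hsupp2 v hv
      have hflip : cross2 (i - k2) (v - i) = - cross2 (k2 - i) (v - i) := by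
        simp only [cross2, Prod.fst_sub, Prod.snd_sub, Prod.fst_add, Prod.snd_add, Prod.fst_neg, Prod.snd_neg]; ring
      linarith
  -- conclusion
  by_cases h1 : 0 ≤ cross2 u (k1 - i)
  · refine ⟨k1, ⟨p, hpU, hedge1⟩, ?_⟩
    rw [cross_eq_cross2]
    exact h1
  by_cases h2 : 0 ≤ cross2 u (k2 - i)
  · refine ⟨k2, ⟨p, hpU, hedge2⟩, ?_⟩
    rw [cross_eq_cross2]
    exact h2
  exfalso
  push_neg at h1 h2
  have hv0i : v0 ≠ i := by
    intro h
    rw [h] at hv0pos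
    simp [cross2] at hv0pos
  have hv0S : v0 ∈ S := Finset.mem_erase.2 ⟨hv0i, hv0p⟩
  have hv0k1 : v0 ≠ k1 := fun h => by rw [h] at hv0pos; linarith
  have hv0k2 : v0 ≠ k2 := fun h => by rw [h] at hv0pos; linarith
  have h01 : 0 ≤ cross2 (v0 - i) (k1 - i) := horder v0 hv0S k1 hk1S (hk1max v0 hv0S)
  have h20 : 0 ≤ cross2 (k2 - i) (v0 - i) := horder k2 hk2S v0 hv0S (hk2min v0 hv0S)
  by_cases hk12 : k1 = k2
  · have h10 : 0 ≤ cross2 (k1 - i) (v0 - i) := by rw [hk12]; exact h20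
    have hflip : cross2 (k1 - i) (v0 - i) = - cross2 (v0 - i) (k1 - i) := by
      simp only [cross2, Prod.fst_sub, Prod.snd_sub, Prod.fst_add, Prod.snd_add, Prod.fst_neg, Prod.snd_neg]; ring
    have hzero : cross i v0 k1 = 0 := by
      rw [cross_eq_cross2]
      linarith
    exact hgp i hi v0 (hpP hv0p) k1 (hpP (hSsub k1 hk1S))
      (Ne.symm hv0i) hv0k1 hik1 hzero
  · have h12 : cross2 (k1 - i) (k2 - i) ≤ 0 := hsupp1 k2 (hSsub k2 hk2S)
    have h12ne : cross2 (k1 - i) (k2 - i) ≠ 0 := by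
      intro h
      have hzero : cross i k1 k2 = 0 := by rw [cross_eq_cross2]; exact h
      exact hgp i hi k1 (hpP (hSsub k1 hk1S)) k2 (hpP (hSsub k2 hk2S))
        hik1 hk12 hik2 hzero
    have h12lt : cross2 (k1 - i) (k2 - i) < 0 := lt_of_le_of_ne h12 h12ne
    have hid : cross2 u (v0 - i) * cross2 (k1 - i) (k2 - i)
        = cross2 u (k1 - i) * cross2 (v0 - i) (k2 - i)
          - cross2 u (k2 - i) * cross2 (v0 - i) (k1 - i) := by
      simp only [cross2, Prod.fst_sub, Prod.snd_sub, Prod.fst_add, Prod.snd_add, Prod.fst_neg, Prod.snd_neg]; ring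
    have h02 : cross2 (v0 - i) (k2 - i) ≤ 0 := by
      have hflip : cross2 (v0 - i) (k2 - i) = - cross2 (k2 - i) (v0 - i) := by
        simp only [cross2, Prod.fst_sub, Prod.snd_sub, Prod.fst_add, Prod.snd_add, Prod.fst_neg, Prod.snd_neg]; ring
      linarith
    have t1 : 0 ≤ cross2 u (k1 - i) * cross2 (v0 - i) (k2 - i) := by
      have := mul_nonneg (neg_nonneg.2 h1.le) (neg_nonneg.2 h02)
      rwa [neg_mul_neg] at this
    have t2 : cross2 u (k2 - i) * cross2 (v0 - i) (k1 - i) ≤ 0 :=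
      mul_nonpos_iff.2 (Or.inr ⟨h2.le, h01⟩)
    have t3 : cross2 u (v0 - i) * cross2 (k1 - i) (k2 - i) < 0 :=
      mul_neg_of_pos_of_neg hv0pos h12lt
    linarith
end

section
/- Let f ∈ ℝᴾ be a face of the arrangement of a point set P in general position, and p an empty convex polygon with vertices in P. If the interior of f intersects the interior of p, then f ⊆ p (faces of the arrangement are atomic with respect to empty convex polygons on P). -/
open Set

attribute [local instance] Classical.propDecidable

lemma finrank_Pt : Module.finrank ℝ Pt = 2 := by
  simp [Pt, Module.finrank_prod]

/-- A point of a convex hull of a planar set that is not in the interior of the hull lies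
on a segment between two points of the set. -/
lemma frontier_mem_segment {s : Set Pt} {x : Pt} (hx : x ∈ convexHull ℝ s)
    (hnx : x ∉ interior (convexHull ℝ s)) :
    ∃ a ∈ s, ∃ b ∈ s, x ∈ segment ℝ a b := by
  obtain ⟨ι, hfin, z, w, hrange, hindep, hpos, hsum, hx'⟩ :=
    eq_pos_convex_span_of_mem_convexHull hx
  have hcard : Fintype.card ι ≤ 3 := by
    have h := hindep.card_le_finrank_succ
    have h2 : Module.finrank ℝ (vectorSpan ℝ (Set.range z)) ≤ 2 := by
      simpa [finrank_Pt] using (vectorSpan ℝ (Set.range z)).finrank_le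
    exact h.trans (Nat.add_le_add_right h2 1)
  -- card 3 is impossible: then x would be interior
  have hne3 : Fintype.card ι ≠ 3 := by
    intro h3
    apply hnx
    have tot : affineSpan ℝ (Set.range z) = ⊤ :=
      hindep.affineSpan_eq_top_iff_card_eq_finrank_add_one.mpr (by rw [h3, finrank_Pt])
    let b : AffineBasis ι ℝ Pt := ⟨z, hindep, tot⟩
    have hxcomb : x = Finset.univ.affineCombination ℝ z w := by
      rw [Finset.univ.affineCombination_eq_linear_combination z w hsum, hx']
    have hxint : x ∈ interior (convexHull ℝ (Set.range z)) := by
      have : interior (convexHull ℝ (Set.range b)) = {y | ∀ i, 0 < b.coord i y} :=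
        b.interior_convexHull
      have hb : Set.range b = Set.range z := rfl
      rw [← hb, this]
      intro i
      rw [hxcomb]
      have hco : (b.coord i) ((Finset.affineCombination ℝ Finset.univ z) w) = w i :=
        b.coord_apply_combination_of_mem (Finset.mem_univ i) hsum
      rw [hco]
      exact hpos i
    exact interior_mono (convexHull_mono hrange) hxint
  -- so card ≤ 2
  rcases Nat.lt_or_ge (Fintype.card ι) 1 with h0 | h1
  · -- card 0 : empty sum can't be 1
    exfalso
    have : IsEmpty ι := Fintype.card_eq_zero_iff.mp (by omega)
    simp [Finset.univ_eq_empty] at hsum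
  rcases Nat.lt_or_ge (Fintype.card ι) 2 with h1' | h2
  · -- card 1
    have hc1 : (Finset.univ : Finset ι).card = 1 := by
      rw [Finset.card_univ]; omega
    obtain ⟨i, hi⟩ := Finset.card_eq_one.mp hc1
    refine ⟨z i, hrange ⟨i, rfl⟩, z i, hrange ⟨i, rfl⟩, ?_⟩
    have hw1 : w i = 1 := by rw [hi, Finset.sum_singleton] at hsum; exact hsum
    have : x = z i := by rw [← hx', hi, Finset.sum_singleton, hw1, one_smul]
    rw [this]; exact left_mem_segment ℝ _ _
  · -- card 2
    have hc2 : (Finset.univ : Finset ι).card = 2 := by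
      rw [Finset.card_univ]; omega
    obtain ⟨i, j, hij, huniv⟩ := Finset.card_eq_two.mp hc2
    refine ⟨z i, hrange ⟨i, rfl⟩, z j, hrange ⟨j, rfl⟩, ?_⟩
    rw [huniv, Finset.sum_pair hij] at hsum hx'
    exact ⟨w i, w j, (hpos i).le, (hpos j).le, hsum, hx'⟩

/-- faces of the arrangement are atomic — if the (open) face `F` meets
the interior of an empty convex polygon `p`, then the closure of `F` lies inside `p`. -/
theorem stmt_12 (P : Finset Pt) (hgp : GenPos P) (F : Set Pt)
    (hF : IsBoundedFace P F) (p : Finset Pt) (hp : IsEmptyPolygon P p)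
    (hmeet : (F ∩ interior (convexHull ℝ (p : Set Pt))).Nonempty) :
    closure F ⊆ convexHull ℝ (p : Set Pt) := by
  set K := convexHull ℝ (p : Set Pt) with hK
  have hKclosed : IsClosed K := (p : Set Pt).toFinite.isClosed_convexHull ℝ
  -- the frontier of the polygon is made of segments between points of P
  have hfr : frontier K ⊆ arrUnion P := by
    intro x hx
    have hxK : x ∈ K := hKclosed.closure_eq ▸ hx.1
    have hxint : x ∉ interior K := hx.2
    obtain ⟨a, ha, b, hb, hseg⟩ := frontier_mem_segment hxK hxint
    exact Set.mem_biUnion (hp.1 ha) (Set.mem_biUnion (hp.1 hb) hseg)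
  obtain ⟨⟨x₀, hx₀, hFeq⟩, _⟩ := hF
  have hFsub : F ⊆ (arrUnion P)ᶜ := hFeq ▸ connectedComponentIn_subset _ _
  have hFconn : IsPreconnected F := hFeq ▸ isPreconnected_connectedComponentIn
  -- F avoids the frontier of K, so being connected it stays in the interior
  have hFint : F ⊆ interior K := by
    have hsub : F ⊆ interior K ∪ Kᶜ := by
      intro y hy
      by_cases hyK : y ∈ K
      · by_cases hyI : y ∈ interior K
        · exact Or.inl hyI
        · exact absurd (hfr ⟨subset_closure hyK, hyI⟩) (hFsub hy)
      · exact Or.inr hyK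
    refine hFconn.subset_left_of_subset_union isOpen_interior hKclosed.isOpen_compl
      ?_ hsub hmeet
    exact Set.disjoint_left.mpr fun y hyI hyC => hyC (interior_subset hyI)
  calc closure F ⊆ closure (interior K) := closure_mono hFint
    _ ⊆ K := hKclosed.closure_interior_subset
end

section
/- For the set-partition linear program min ∑_p u_p subject to ∑_{p ⊇ f} u_p = 1 for all faces f and u ≥ 0, with all objective coefficients equal to 1: if z is the optimal value of a restricted master problem and c̄ ≤ 0 is the minimum reduced cost over all columns, then z / (1 − c̄) is a lower bound on the optimal value of the full linear program. -/
/-- Farley/Lübbecke bound for unit costs: for the set-partition LP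
min 1ᵀu s.t. Au = 1, u ≥ 0, with A a 0-1 matrix, dual vector α of the restricted
master with objective value z = 1ᵀα, and minimum reduced cost c̄ ≤ 0, every feasible
u of the full LP satisfies 1ᵀu ≥ z / (1 - c̄). -/
theorem stmt_13 {ι F : Type*} [Fintype ι] [Fintype F]
    (A : F → ι → ℝ) (hA : ∀ f p, A f p = 0 ∨ A f p = 1)
    (α : F → ℝ) (cbar : ℝ)
    (hmin : ∀ p : ι, cbar ≤ 1 - ∑ f : F, α f * A f p)
    (hneg : cbar ≤ 0)
    (u : ι → ℝ) (hu : ∀ p, 0 ≤ u p)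
    (hfeas : ∀ f : F, ∑ p : ι, A f p * u p = 1) :
    (∑ f : F, α f) / (1 - cbar) ≤ ∑ p : ι, u p := by
  have hpos : 0 < 1 - cbar := by linarith
  rw [div_le_iff₀ hpos]
  have key : ∑ f : F, α f = ∑ p : ι, u p * ∑ f : F, α f * A f p := by
    calc ∑ f : F, α f = ∑ f : F, α f * ∑ p : ι, A f p * u p := by
          simp [hfeas]
      _ = ∑ p : ι, u p * ∑ f : F, α f * A f p := by
          simp only [Finset.mul_sum]
          rw [Finset.sum_comm]
          apply Finset.sum_congr rfl; intro p _
          apply Finset.sum_congr rfl; intro f _; ring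
  rw [key, Finset.sum_mul]
  apply Finset.sum_le_sum
  intro p _
  have h := hmin p
  have := hu p
  nlinarith [hmin p, hu p]
end
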